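/- K⁺(λ) = (1/2)·K(λ+η,ξ⁺) is a c-number solution of the right reflection equation with the XXZ R-matrix: for all λ, μ ∈ ℂ for which all sinh- and cosh-denominators appearing are nonzero, R₁₂(−λ+μ)K⁺₁^{t₁}(λ)R₁₂(−λ−μ−2η)K⁺₂^{t₂}(μ) = K⁺₂^{t₂}(μ)R₁₂(−λ−μ−2η)K⁺₁^{t₁}(λ)R₁₂(−λ+μ) as operators on ℂ² ⊗ ℂ², where K⁺₁^{t₁} = (K⁺)ᵀ ⊗ I₂ and K⁺₂^{t₂} = I₂ ⊗ (K⁺)ᵀ. -/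

import Mathlib

/- STATEMENT 3: K⁺(λ) = (1/2)·K(λ+η,ξ⁺) solves the right reflection equation with the XXZ R-matrix. -/

noncomputable section

open Complex Matrix Kronecker

/-- `b(λ) = sinh(λ)/sinh(λ+η)`. -/
def bf (η lam : ℂ) : ℂ := Complex.sinh lam / Complex.sinh (lam + η)

/-- `c(λ) = sinh(η)/sinh(λ+η)`. -/
def cf (η lam : ℂ) : ℂ := Complex.sinh η / Complex.sinh (lam + η)

/-- The XXZ R-matrix on ℂ² ⊗ ℂ². -/
def Rxxz (η lam : ℂ) : Matrix (Fin 2 × Fin 2) (Fin 2 × Fin 2) ℂ :=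
  Matrix.of fun p q =>
    if p.1 = q.1 ∧ p.2 = q.2 then (if p.1 = p.2 then 1 else bf η lam)
    else if p.1 = q.2 ∧ p.2 = q.1 then cf η lam else 0

/-- coth. -/
def coth (z : ℂ) : ℂ := Complex.cosh z / Complex.sinh z

/-- `K(λ,ξ) = I₂ + tanh(λ)·coth(ξ)·σᶻ`. -/
def Kmat (lam ξ : ℂ) : Matrix (Fin 2) (Fin 2) ℂ :=
  1 + (Complex.tanh lam * coth ξ) • !![1, 0; 0, -1]

/-- `K ⊗ I₂`, i.e. K acting in the first tensor factor of ℂ² ⊗ ℂ². -/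
def k1 (K : Matrix (Fin 2) (Fin 2) ℂ) : Matrix (Fin 2 × Fin 2) (Fin 2 × Fin 2) ℂ :=
  K ⊗ₖ (1 : Matrix (Fin 2) (Fin 2) ℂ)

/-- `I₂ ⊗ K`, i.e. K acting in the second tensor factor of ℂ² ⊗ ℂ². -/
def k2 (K : Matrix (Fin 2) (Fin 2) ℂ) : Matrix (Fin 2 × Fin 2) (Fin 2 × Fin 2) ℂ :=
  (1 : Matrix (Fin 2) (Fin 2) ℂ) ⊗ₖ K



section RRE_Aux

lemma one_add_tc (a ξ : ℂ) (ha : Complex.cosh a ≠ 0) (hξ : Complex.sinh ξ ≠ 0) :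
    1 + Complex.tanh a * coth ξ = Complex.sinh (ξ + a) / (Complex.cosh a * Complex.sinh ξ) := by
  rw [Complex.tanh_eq_sinh_div_cosh, coth, Complex.sinh_add]; field_simp

lemma one_sub_tc (a ξ : ℂ) (ha : Complex.cosh a ≠ 0) (hξ : Complex.sinh ξ ≠ 0) :
    1 + -(Complex.tanh a * coth ξ) = Complex.sinh (ξ - a) / (Complex.cosh a * Complex.sinh ξ) := by
  rw [Complex.tanh_eq_sinh_div_cosh, coth, Complex.sinh_sub]; field_simp; ring

lemma trig_key (ξ η lam mu : ℂ) :
    Complex.sinh (-lam + mu) * (Complex.sinh (ξ + (lam + η)) * Complex.sinh (ξ + (mu + η))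
        - Complex.sinh (ξ - (lam + η)) * Complex.sinh (ξ - (mu + η)))
      = Complex.sinh (-lam - mu - 2 * η) * (Complex.sinh (ξ + (lam + η)) * Complex.sinh (ξ - (mu + η))
        - Complex.sinh (ξ - (lam + η)) * Complex.sinh (ξ + (mu + η))) := by
  simp only [Complex.sinh, Complex.exp_add, Complex.exp_sub, Complex.exp_neg, neg_add, neg_sub,
    two_mul]
  field_simp [Complex.exp_ne_zero]
  ring

set_option maxHeartbeats 1000000 in
lemma rre_key1 (η : ℂ) (hη : Complex.sinh η ≠ 0)
    (ξp : ℂ) (hξp : Complex.sinh ξp ≠ 0) (lam mu : ℂ)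
    (hc1 : Complex.cosh (lam + η) ≠ 0) (hc2 : Complex.cosh (mu + η) ≠ 0)
    (hs1 : Complex.sinh (-lam + mu + η) ≠ 0)
    (hs2 : Complex.sinh (-lam - mu - η) ≠ 0) :
    (bf η (-lam + mu) * (1 / 2 * (1 + Complex.tanh (lam + η) * coth ξp)) * cf η (-lam - mu - 2 * η) +
        cf η (-lam + mu) * (1 / 2 * (1 + -(Complex.tanh (lam + η) * coth ξp))) * bf η (-lam - mu - 2 * η)) *
      (1 / 2 * (1 + Complex.tanh (mu + η) * coth ξp)) =
    1 / 2 * (1 + -(Complex.tanh (mu + η) * coth ξp)) * bf η (-lam - mu - 2 * η) *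
          (1 / 2 * (1 + Complex.tanh (lam + η) * coth ξp)) *
        cf η (-lam + mu) +
      1 / 2 * (1 + -(Complex.tanh (mu + η) * coth ξp)) * cf η (-lam - mu - 2 * η) *
          (1 / 2 * (1 + -(Complex.tanh (lam + η) * coth ξp))) *
        bf η (-lam + mu) := by
  have hs2' : Complex.sinh (-lam - mu - 2 * η + η) ≠ 0 := by
    rw [show -lam - mu - 2 * η + η = -lam - mu - η by ring]; exact hs2
  rw [one_add_tc _ _ hc1 hξp, one_sub_tc _ _ hc1 hξp, one_add_tc _ _ hc2 hξp,
    one_sub_tc _ _ hc2 hξp]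
  simp only [bf, cf]
  field_simp
  rw [div_left_inj' (by rw [mul_comm η 2]; exact hs2'), mul_comm η 2]
  linear_combination trig_key ξp η lam mu

set_option maxHeartbeats 1000000 in
lemma rre_key2 (η : ℂ) (hη : Complex.sinh η ≠ 0)
    (ξp : ℂ) (hξp : Complex.sinh ξp ≠ 0) (lam mu : ℂ)
    (hc1 : Complex.cosh (lam + η) ≠ 0) (hc2 : Complex.cosh (mu + η) ≠ 0)
    (hs1 : Complex.sinh (-lam + mu + η) ≠ 0)
    (hs2 : Complex.sinh (-lam - mu - η) ≠ 0) :
    (cf η (-lam + mu) * (1 / 2 * (1 + Complex.tanh (lam + η) * coth ξp)) * bf η (-lam - mu - 2 * η) +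
        bf η (-lam + mu) * (1 / 2 * (1 + -(Complex.tanh (lam + η) * coth ξp))) * cf η (-lam - mu - 2 * η)) *
      (1 / 2 * (1 + -(Complex.tanh (mu + η) * coth ξp))) =
    1 / 2 * (1 + Complex.tanh (mu + η) * coth ξp) * cf η (-lam - mu - 2 * η) *
          (1 / 2 * (1 + Complex.tanh (lam + η) * coth ξp)) *
        bf η (-lam + mu) +
      1 / 2 * (1 + Complex.tanh (mu + η) * coth ξp) * bf η (-lam - mu - 2 * η) *
          (1 / 2 * (1 + -(Complex.tanh (lam + η) * coth ξp))) *
        cf η (-lam + mu) := by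
  have hs2' : Complex.sinh (-lam - mu - 2 * η + η) ≠ 0 := by
    rw [show -lam - mu - 2 * η + η = -lam - mu - η by ring]; exact hs2
  rw [one_add_tc _ _ hc1 hξp, one_sub_tc _ _ hc1 hξp, one_add_tc _ _ hc2 hξp,
    one_sub_tc _ _ hc2 hξp]
  simp only [bf, cf]
  field_simp
  rw [div_left_inj' (by rw [mul_comm η 2]; exact hs2'), mul_comm η 2]
  linear_combination (-1 : ℂ) * trig_key ξp η lam mu

end RRE_Aux

set_option maxHeartbeats 4000000 in
/-- `K⁺(λ) = (1/2)·K(λ+η,ξ⁺)` is a c-number solution of the right reflection equation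
`R₁₂(−λ+μ)K⁺₁^{t₁}(λ)R₁₂(−λ−μ−2η)K⁺₂^{t₂}(μ) = K⁺₂^{t₂}(μ)R₁₂(−λ−μ−2η)K⁺₁^{t₁}(λ)R₁₂(−λ+μ)`,
where `K⁺₁^{t₁} = (K⁺)ᵀ ⊗ I₂` and `K⁺₂^{t₂} = I₂ ⊗ (K⁺)ᵀ`. -/
theorem Kplus_right_reflection (η : ℂ) (hη : Complex.sinh η ≠ 0)
    (ξp : ℂ) (hξp : Complex.sinh ξp ≠ 0) (lam mu : ℂ)
    (hc1 : Complex.cosh (lam + η) ≠ 0) (hc2 : Complex.cosh (mu + η) ≠ 0)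
    (hs1 : Complex.sinh (-lam + mu + η) ≠ 0)
    (hs2 : Complex.sinh (-lam - mu - η) ≠ 0) :
    Rxxz η (-lam + mu) * k1 (((2:ℂ)⁻¹ • Kmat (lam + η) ξp)ᵀ) * Rxxz η (-lam - mu - 2 * η) *
        k2 (((2:ℂ)⁻¹ • Kmat (mu + η) ξp)ᵀ) =
      k2 (((2:ℂ)⁻¹ • Kmat (mu + η) ξp)ᵀ) * Rxxz η (-lam - mu - 2 * η) *
        k1 (((2:ℂ)⁻¹ • Kmat (lam + η) ξp)ᵀ) * Rxxz η (-lam + mu) := by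
  ext ⟨i,j⟩ ⟨k,l⟩
  fin_cases i <;> fin_cases j <;> fin_cases k <;> fin_cases l <;>
    simp only [Matrix.mul_apply, Fintype.sum_prod_type, Fin.sum_univ_two, k1, k2, Rxxz, Kmat,
      Matrix.kroneckerMap_apply, Matrix.of_apply, Matrix.one_apply, Matrix.transpose_apply,
      Matrix.smul_apply, Matrix.add_apply, Matrix.cons_val', Matrix.cons_val_zero,
      Matrix.cons_val_one, Matrix.head_cons, Matrix.head_fin_const, Matrix.empty_val',
      Matrix.cons_val_fin_one, smul_eq_mul, Prod.mk.injEq, Fin.isValue, one_ne_zero,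
      zero_ne_one, and_self, and_true, true_and, and_false, false_and, if_true, if_false,
      ite_true, ite_false, not_false_eq_true, one_mul, mul_one, mul_zero, zero_mul, add_zero,
      zero_add, mul_neg, neg_mul, neg_neg, one_div] <;>
    norm_num
  all_goals first
    | exact rre_key1 η hη ξp hξp lam mu hc1 hc2 hs1 hs2
    | exact rre_key2 η hη ξp hξp lam mu hc1 hc2 hs1 hs2
    | ring1

end
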